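/- For every point p ∈ Q1((0,0), 2ε) \ Q1((0,0), ε) and every q ∈ ℝ² with dist(p, q) = 1, the closed segment [p, q] is not contained in the tunnel T. Likewise, for every point p ∈ Q4((0,0.6), 2ε) \ Q4((0,0.6), ε) and every q ∈ ℝ² with dist(p, q) = 1, the closed segment [p, q] is not contained in T. -/

import Mathlib

noncomputable section

open Set

/-- The Euclidean plane. -/
abbrev E2 := EuclideanSpace ℝ (Fin 2)

/-- The point of `ℝ²` with coordinates `x` and `y`. -/
def pt (x y : ℝ) : E2 := (WithLp.equiv 2 (Fin 2 → ℝ)).symm ![x, y]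

/-- Piecewise-linear interpolation through a list of breakpoints `(xᵢ, yᵢ)`
(with strictly increasing `xᵢ`), evaluated at `x`. -/
def pl : List (ℝ × ℝ) → ℝ → ℝ
  | [], _ => 0
  | [(_, y₀)], _ => y₀
  | (x₀, y₀) :: (x₁, y₁) :: rest, x =>
      if x ≤ x₁ then y₀ + (y₁ - y₀) * (x - x₀) / (x₁ - x₀)
      else pl ((x₁, y₁) :: rest) x

/-- The quadrant area `Q1(c, r)`: points of the closed disc of radius `r` around `c`
that lie (weakly) to the upper right of `c`. -/
def Q1 (c : E2) (r : ℝ) : Set E2 := {p | dist p c ≤ r ∧ c 0 ≤ p 0 ∧ c 1 ≤ p 1}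

/-- The quadrant area `Q2(c, r)` (upper left). -/
def Q2 (c : E2) (r : ℝ) : Set E2 := {p | dist p c ≤ r ∧ p 0 ≤ c 0 ∧ c 1 ≤ p 1}

/-- The quadrant area `Q3(c, r)` (lower left). -/
def Q3 (c : E2) (r : ℝ) : Set E2 := {p | dist p c ≤ r ∧ p 0 ≤ c 0 ∧ p 1 ≤ c 1}

/-- The quadrant area `Q4(c, r)` (lower right). -/
def Q4 (c : E2) (r : ℝ) : Set E2 := {p | dist p c ≤ r ∧ c 0 ≤ p 0 ∧ p 1 ≤ c 1}

/-- The breakpoints of the lower boundary polyline of the tunnel (here `ε' = ε/2`). -/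
def tunnelLowerPts (ε : ℝ) : List (ℝ × ℝ) :=
  [(0, 0), (ε / 2, 0), (0.4, 0.3 - ε / 2), (0.8 - ε / 2, 0), (0.8, 0),
   (0.8 + ε / 2, 0), (1.2, 0.3 - ε / 2), (1.6 - ε / 2, 0), (1.6, 0)]

/-- The breakpoints of the upper boundary polyline of the tunnel (here `ε' = ε/2`). -/
def tunnelUpperPts (ε : ℝ) : List (ℝ × ℝ) :=
  [(0, 0.6), (ε / 2, 0.6), (0.4, 0.3 + ε / 2), (0.8 - ε / 2, 0.6), (0.8, 0.6),
   (0.8 + ε / 2, 0.6), (1.2, 0.3 + ε / 2), (1.6 - ε / 2, 0.6), (1.6, 0.6)]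

/-- Obstacle OT1: the triangle with vertices `(0, ε')`, `(0.4 − ε', 0.3)`, `(0, 0.6 − ε')`. -/
def OT1 (ε : ℝ) : Set E2 :=
  convexHull ℝ {pt 0 (ε / 2), pt (0.4 - ε / 2) 0.3, pt 0 (0.6 - ε / 2)}

/-- Obstacle OT2: the rhombus with vertices `(0.4 + ε', 0.3)`, `(0.8, ε')`,
`(1.2 − ε', 0.3)`, `(0.8, 0.6 − ε')`. -/
def OT2 (ε : ℝ) : Set E2 :=
  convexHull ℝ {pt (0.4 + ε / 2) 0.3, pt 0.8 (ε / 2), pt (1.2 - ε / 2) 0.3, pt 0.8 (0.6 - ε / 2)}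

/-- Obstacle OT3: the triangle with vertices `(1.6, ε')`, `(1.2 + ε', 0.3)`, `(1.6, 0.6 − ε')`. -/
def OT3 (ε : ℝ) : Set E2 :=
  convexHull ℝ {pt 1.6 (ε / 2), pt (1.2 + ε / 2) 0.3, pt 1.6 (0.6 - ε / 2)}

/-- The tunnel `T`: the closed region between the lower and upper sawtooth polylines
over `0 ≤ x ≤ 1.6`, with the interiors of the three obstacles OT1, OT2, OT3 removed. -/
def tunnel (ε : ℝ) : Set E2 :=
  {p | 0 ≤ p 0 ∧ p 0 ≤ 1.6 ∧
      pl (tunnelLowerPts ε) (p 0) ≤ p 1 ∧ p 1 ≤ pl (tunnelUpperPts ε) (p 0)} \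
    (interior (OT1 ε) ∪ interior (OT2 ε) ∪ interior (OT3 ε))


-- ===== auxiliary lemmas =====

section Aux

lemma pt_app0 (x y : ℝ) : pt x y 0 = x := rfl
lemma pt_app1 (x y : ℝ) : pt x y 1 = y := rfl
lemma pt_self (w : E2) : w = pt (w 0) (w 1) := by
  refine PiLp.ext fun j => ?_; fin_cases j <;> rfl
lemma pt_congr {x y x' y' : ℝ} (h1 : x = x') (h2 : y = y') : pt x y = pt x' y' := by rw [h1, h2]
lemma smul_pt (c x y : ℝ) : c • pt x y = pt (c*x) (c*y) := by
  refine PiLp.ext fun j => ?_; fin_cases j <;> rfl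
lemma add_pt (x y x' y' : ℝ) : pt x y + pt x' y' = pt (x+x') (y+y') := by
  refine PiLp.ext fun j => ?_; fin_cases j <;> rfl

lemma comb_app0 (p q : E2) (t : ℝ) : (p + t • (q - p)) 0 = p 0 + t * (q 0 - p 0) := by simp
lemma comb_app1 (p q : E2) (t : ℝ) : (p + t • (q - p)) 1 = p 1 + t * (q 1 - p 1) := by simp

lemma dist_sq (p q : E2) : dist p q = Real.sqrt ((p 0 - q 0)^2 + (p 1 - q 1)^2) := by
  rw [EuclideanSpace.dist_eq, Fin.sum_univ_two]
  simp [Real.dist_eq, sq_abs]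

lemma abs_coord (w z : E2) : |w 0 - z 0| ≤ dist w z ∧ |w 1 - z 1| ≤ dist w z := by
  rw [dist_sq]
  constructor
  · rw [← Real.sqrt_sq_eq_abs]
    exact Real.sqrt_le_sqrt (by nlinarith [sq_nonneg (w 1 - z 1)])
  · rw [← Real.sqrt_sq_eq_abs]
    exact Real.sqrt_le_sqrt (by nlinarith [sq_nonneg (w 0 - z 0)])

lemma interp_bound {y0 y1 x0 x1 x lo hi : ℝ} (h : x0 < x1) (hx0 : x0 ≤ x) (hx1 : x ≤ x1)
    (a0 : lo ≤ y0) (b0 : y0 ≤ hi) (a1 : lo ≤ y1) (b1 : y1 ≤ hi) :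
    lo ≤ y0 + (y1 - y0) * (x - x0) / (x1 - x0) ∧ y0 + (y1 - y0) * (x - x0) / (x1 - x0) ≤ hi := by
  have hd : 0 < x1 - x0 := by linarith
  have ht0 : 0 ≤ (x - x0) / (x1 - x0) := div_nonneg (by linarith) hd.le
  have ht1 : (x - x0) / (x1 - x0) ≤ 1 := (div_le_one hd).mpr (by linarith)
  have he : y0 + (y1 - y0) * (x - x0) / (x1 - x0) = y0 + (y1 - y0) * ((x - x0) / (x1 - x0)) := by
    rw [mul_div_assoc]
  rw [he]
  constructor <;> nlinarith

variable {ε : ℝ}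

lemma pl_lower_bounds (hε0 : 0 < ε) (hε : ε ≤ 1/100) {x : ℝ} (h0 : 0 ≤ x) :
    0 ≤ pl (tunnelLowerPts ε) x ∧ pl (tunnelLowerPts ε) x ≤ 0.6 := by
  simp only [tunnelLowerPts, pl]
  split_ifs with h1 h2 h3 h4 h5 h6 h7 h8
  · exact interp_bound (by linarith) h0 h1 le_rfl (by norm_num) le_rfl (by norm_num)
  · exact interp_bound (by norm_num; linarith) (by linarith) h2 le_rfl (by norm_num) (by linarith) (by norm_num; linarith)
  · exact interp_bound (by norm_num; linarith) (by linarith) h3 (by linarith) (by norm_num; linarith) le_rfl (by norm_num)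
  · exact interp_bound (by norm_num; linarith) (by linarith) h4 le_rfl (by norm_num) le_rfl (by norm_num)
  · exact interp_bound (by norm_num; linarith) (by linarith) h5 le_rfl (by norm_num) le_rfl (by norm_num)
  · exact interp_bound (by norm_num; linarith) (by linarith) h6 le_rfl (by norm_num) (by linarith) (by norm_num; linarith)
  · exact interp_bound (by norm_num; linarith) (by linarith) h7 (by linarith) (by norm_num; linarith) le_rfl (by norm_num)
  · exact interp_bound (by norm_num; linarith) (by linarith) h8 le_rfl (by norm_num) le_rfl (by norm_num)
  · norm_num

lemma pl_upper_bounds (hε0 : 0 < ε) (hε : ε ≤ 1/100) {x : ℝ} (h0 : 0 ≤ x) :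
    0 ≤ pl (tunnelUpperPts ε) x ∧ pl (tunnelUpperPts ε) x ≤ 0.6 := by
  simp only [tunnelUpperPts, pl]
  split_ifs with h1 h2 h3 h4 h5 h6 h7 h8
  · exact interp_bound (by linarith) h0 h1 (by norm_num) le_rfl (by norm_num) le_rfl
  · exact interp_bound (by norm_num; linarith) (by linarith) h2 (by norm_num) le_rfl (by linarith) (by norm_num; linarith)
  · exact interp_bound (by norm_num; linarith) (by linarith) h3 (by linarith) (by norm_num; linarith) (by norm_num) le_rfl
  · exact interp_bound (by norm_num; linarith) (by linarith) h4 (by norm_num) le_rfl (by norm_num) le_rfl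
  · exact interp_bound (by norm_num; linarith) (by linarith) h5 (by norm_num) le_rfl (by norm_num) le_rfl
  · exact interp_bound (by norm_num; linarith) (by linarith) h6 (by norm_num) le_rfl (by linarith) (by norm_num; linarith)
  · exact interp_bound (by norm_num; linarith) (by linarith) h7 (by linarith) (by norm_num; linarith) (by norm_num) le_rfl
  · exact interp_bound (by norm_num; linarith) (by linarith) h8 (by norm_num) le_rfl (by norm_num) le_rfl
  · norm_num

lemma pl_lower_at04 (hε0 : 0 < ε) (hε : ε ≤ 1/100) :
    pl (tunnelLowerPts ε) 0.4 = 0.3 - ε/2 := by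
  have hne : (0.4 : ℝ) - ε/2 ≠ 0 := by norm_num; linarith
  simp only [tunnelLowerPts, pl]
  rw [if_neg (by norm_num; linarith), if_pos le_rfl, mul_div_assoc, div_self hne]
  ring

lemma pl_upper_at04 (hε0 : 0 < ε) (hε : ε ≤ 1/100) :
    pl (tunnelUpperPts ε) 0.4 = 0.3 + ε/2 := by
  have hne : (0.4 : ℝ) - ε/2 ≠ 0 := by norm_num; linarith
  simp only [tunnelUpperPts, pl]
  rw [if_neg (by norm_num; linarith), if_pos le_rfl, mul_div_assoc, div_self hne]
  ring

lemma pl_upper_late (hε0 : 0 < ε) (hε : ε ≤ 1/100) {x : ℝ} (h1 : 0.8 + ε/2 < x) (h2 : x ≤ 1.2) :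
    pl (tunnelUpperPts ε) x = 0.6 - (0.3 - ε/2) * (x - (0.8 + ε/2)) / (0.4 - ε/2) := by
  simp only [tunnelUpperPts, pl]
  rw [if_neg (by linarith), if_neg (by linarith), if_neg (by linarith), if_neg (by linarith),
    if_neg (by linarith), if_pos (by norm_num; linarith)]
  have hne : (1.2 : ℝ) - (0.8 + ε/2) ≠ 0 := by norm_num; linarith
  field_simp
  ring

lemma pl_lower_late (hε0 : 0 < ε) (hε : ε ≤ 1/100) {x : ℝ} (h1 : 0.8 + ε/2 < x) (h2 : x ≤ 1.2) :
    pl (tunnelLowerPts ε) x = (0.3 - ε/2) * (x - (0.8 + ε/2)) / (0.4 - ε/2) := by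
  simp only [tunnelLowerPts, pl]
  rw [if_neg (by linarith), if_neg (by linarith), if_neg (by linarith), if_neg (by linarith),
    if_neg (by linarith), if_pos (by norm_num; linarith)]
  have hne : (1.2 : ℝ) - (0.8 + ε/2) ≠ 0 := by norm_num; linarith
  field_simp
  ring

lemma combo4_mem {v1 v2 v3 v4 : E2} {S : Set E2} (h1 : v1 ∈ S) (h2 : v2 ∈ S) (h3 : v3 ∈ S)
    (h4 : v4 ∈ S) {c1 c2 c3 c4 : ℝ} (n1 : 0 ≤ c1) (n2 : 0 ≤ c2) (n3 : 0 ≤ c3) (n4 : 0 ≤ c4)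
    (hs : c1 + c2 + c3 + c4 = 1) :
    c1 • v1 + c2 • v2 + c3 • v3 + c4 • v4 ∈ convexHull ℝ S := by
  have key := (convex_convexHull ℝ S).sum_mem (t := Finset.univ) (w := ![c1,c2,c3,c4])
    (z := ![v1,v2,v3,v4]) ?_ ?_ ?_
  · simpa [Fin.sum_univ_four, add_assoc] using key
  · intro i _; fin_cases i <;> simpa
  · simp [Fin.sum_univ_four]; linarith
  · intro i _
    fin_cases i <;> simp <;> exact subset_convexHull ℝ S (by assumption)

set_option maxHeartbeats 1000000 in
lemma mem_interior_OT2 (hε0 : 0 < ε) (hε : ε ≤ 1/100) {y : ℝ}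
    (h1 : ε/2 < y) (h2 : y < 0.6 - ε/2) : pt 0.8 y ∈ interior (OT2 ε) := by
  obtain ⟨μ, hμ1, hμ2, hμ0⟩ : ∃ μ : ℝ, μ ≤ y - ε/2 ∧ μ ≤ 0.6 - ε/2 - y ∧ 0 < μ :=
    ⟨min (y - ε/2) (0.6 - ε/2 - y), min_le_left _ _, min_le_right _ _,
      lt_min (by linarith) (by linarith)⟩
  rw [mem_interior]
  refine ⟨Metric.ball (pt 0.8 y) (μ/4), ?_, Metric.isOpen_ball, Metric.mem_ball_self (by linarith)⟩
  intro w hw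
  have hw' : dist w (pt 0.8 y) < μ/4 := hw
  have hab := abs_coord w (pt 0.8 y)
  rw [pt_app0, pt_app1] at hab
  obtain ⟨a, ha, hadef⟩ : ∃ a : ℝ, 0 < a ∧ a = 0.4 - ε/2 := ⟨_, by linarith, rfl⟩
  obtain ⟨b, hb, hbdef⟩ : ∃ b : ℝ, 0 < b ∧ b = 0.3 - ε/2 := ⟨_, by linarith, rfl⟩
  obtain ⟨u, hudef⟩ : ∃ u : ℝ, u = w 0 - 0.8 := ⟨_, rfl⟩
  obtain ⟨v, hvdef⟩ : ∃ v : ℝ, v = w 1 - 0.3 := ⟨_, rfl⟩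
  obtain ⟨s, hsdef⟩ : ∃ s : ℝ, s = |v| := ⟨_, rfl⟩
  have hu3 : u ≤ μ/4 := by
    have := (abs_lt.mp (lt_of_le_of_lt hab.1 hw')).2; rw [hudef]; linarith
  have hu4 : -(μ/4) ≤ u := by
    have := (abs_lt.mp (lt_of_le_of_lt hab.1 hw')).1; rw [hudef]; linarith
  have hs1 : v ≤ s := hsdef ▸ le_abs_self v
  have hs2 : -v ≤ s := hsdef ▸ neg_le_abs v
  have hs0 : 0 ≤ s := hsdef ▸ abs_nonneg v
  have hs3 : s ≤ b - 3*μ/4 := by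
    have hy3 : |y - 0.3| ≤ b - μ := abs_le.mpr ⟨by rw [hbdef]; linarith, by rw [hbdef]; linarith⟩
    have hvy : |w 1 - y| < μ/4 := lt_of_le_of_lt hab.2 hw'
    calc s = |(w 1 - y) + (y - 0.3)| := by rw [hsdef, hvdef]; ring_nf
    _ ≤ |w 1 - y| + |y - 0.3| := abs_add_le _ _
    _ ≤ b - 3*μ/4 := by linarith
  have hab' : b ≤ a := by rw [hadef, hbdef]; linarith
  have n1 : 0 ≤ (a*b - s*a - u*b)/(2*a*b) := by
    apply div_nonneg _ (by positivity)
    have p1 : s*a ≤ (b - 3*μ/4)*a := mul_le_mul_of_nonneg_right hs3 ha.le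
    have p2 : u*b ≤ (μ/4)*b := mul_le_mul_of_nonneg_right hu3 hb.le
    have p3 : 0 ≤ μ*(3*a - b) := mul_nonneg hμ0.le (by linarith)
    nlinarith
  have n3 : 0 ≤ (a*b - s*a + u*b)/(2*a*b) := by
    apply div_nonneg _ (by positivity)
    have p1 : s*a ≤ (b - 3*μ/4)*a := mul_le_mul_of_nonneg_right hs3 ha.le
    have p2 : (-(μ/4))*b ≤ u*b := mul_le_mul_of_nonneg_right hu4 hb.le
    have p3 : 0 ≤ μ*(3*a - b) := mul_nonneg hμ0.le (by linarith)
    nlinarith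
  have n2 : 0 ≤ (s - v)/(2*b) := div_nonneg (by linarith) (by linarith)
  have n4 : 0 ≤ (s + v)/(2*b) := div_nonneg (by linarith) (by linarith)
  have hsum : (a*b - s*a - u*b)/(2*a*b) + (s - v)/(2*b) + (a*b - s*a + u*b)/(2*a*b)
      + (s + v)/(2*b) = 1 := by
    field_simp
    ring
  have key := combo4_mem (v1 := pt (0.4 + ε / 2) 0.3) (v2 := pt 0.8 (ε / 2))
    (v3 := pt (1.2 - ε / 2) 0.3) (v4 := pt 0.8 (0.6 - ε / 2))
    (S := {pt (0.4 + ε / 2) 0.3, pt 0.8 (ε / 2), pt (1.2 - ε / 2) 0.3, pt 0.8 (0.6 - ε / 2)})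
    (by simp) (by simp) (by simp) (by simp)
    n1 n2 n3 n4 hsum
  have hweq : w = ((a*b - s*a - u*b)/(2*a*b)) • pt (0.4 + ε / 2) 0.3
      + ((s - v)/(2*b)) • pt 0.8 (ε / 2)
      + ((a*b - s*a + u*b)/(2*a*b)) • pt (1.2 - ε / 2) 0.3
      + ((s + v)/(2*b)) • pt 0.8 (0.6 - ε / 2) := by
    simp only [smul_pt, add_pt]
    rw [pt_self w]
    have hw0 : w 0 = 0.8 + u := by rw [hudef]; ring
    have hw1 : w 1 = 0.3 + v := by rw [hvdef]; ring
    rw [hw0, hw1]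
    have e1 : 0.4 + ε/2 = 0.8 - a := by rw [hadef]; ring
    have e2 : 1.2 - ε/2 = 0.8 + a := by rw [hadef]; ring
    have e3 : ε/2 = 0.3 - b := by rw [hbdef]; ring
    rw [e1, e2, e3]
    refine pt_congr ?_ ?_
    · field_simp
      ring
    · field_simp
      ring
  rw [hweq]
  exact key

end Aux

-- ===== core arithmetic =====

set_option maxHeartbeats 1000000 in
lemma coreB (ε p0 p1 q0 q1 : ℝ) (hε0 : 0 < ε) (hε : ε ≤ 1/100)
    (hp0 : 0 ≤ p0) (hp1 : 0 ≤ p1) (hann : ε^2 < p0^2 + p1^2) (hq1' : q1 ≤ 0.6)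
    (hdist : (q0 - p0)^2 + (q1 - p1)^2 = 1)
    (hee : ε^2 ≤ ε/100)
    (hD8 : 0.8 ≤ q0 - p0) (hu2' : 0 < q1 - p1)
    (hδ : q0 ≤ 0.8 + ε/2) : False := by
  have hp0'' : p0 ≤ ε/2 := by linarith
  have hDub : q0 - p0 ≤ 0.8 + ε/2 := by linarith
  have hDsq : (q0 - p0)^2 ≤ (0.8 + ε/2)^2 := pow_le_pow_left₀ (by linarith) hDub 2
  have hsq : 1 - (0.8 + ε/2)^2 ≤ (q1 - p1)^2 := by linarith [hdist]
  have huge : 0.6 - 0.7*ε ≤ q1 - p1 := by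
    by_contra h
    push_neg at h
    have hpr := mul_pos (show (0:ℝ) < (0.6 - 0.7*ε) - (q1 - p1) by linarith)
      (show (0:ℝ) < (0.6 - 0.7*ε) + (q1 - p1) by linarith)
    nlinarith [hpr, hsq, hee]
  have hp1'' : p1 ≤ 0.7*ε := by linarith
  have s1 : p0*p0 ≤ (ε/2)*(ε/2) := mul_le_mul hp0'' hp0'' hp0 (by linarith)
  have s2 : p1*p1 ≤ (0.7*ε)*(0.7*ε) := mul_le_mul hp1'' hp1'' hp1 (by linarith)
  nlinarith [s1, s2, mul_pos hε0 hε0]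

set_option maxHeartbeats 4000000 in
lemma coreC (ε p0 p1 q0 q1 b : ℝ) (hε0 : 0 < ε) (hε : ε ≤ 1/100)
    (hp0 : 0 ≤ p0) (hp1 : 0 ≤ p1) (hann : ε^2 < p0^2 + p1^2) (hq1' : q1 ≤ 0.6)
    (hdist : (q0 - p0)^2 + (q1 - p1)^2 = 1)
    (hee : ε^2 ≤ ε/100)
    (hbeq : b * (q0 - p0) = p1 * (q0 - p0) + (q1 - p1) * (0.8 - p0))
    (hb2 : 0.6 - ε/2 ≤ b)
    (hD8 : 0.8 ≤ q0 - p0) (hu2' : 0 < q1 - p1)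
    (hupos : (0.3 - ε)*(q0 - p0) ≤ 0.4*(q1 - p1))
    (hδ : 0.8 + ε/2 < q0)
    (HUP : (0.3 - ε/2) * (q0 - (0.8 + ε/2)) ≤ (0.6 - q1) * (0.4 - ε/2)) : False := by
  have hDpos : (0:ℝ) < q0 - p0 := by linarith
  have hd0 : (0:ℝ) < q0 - 0.8 := by linarith
  have hq1D : q1*(q0 - p0) = b*(q0 - p0) + (q1 - p1)*(q0 - 0.8) := by
    linear_combination -hbeq
  have h3 : (0.75 - 2.5*ε)*(q0 - p0)*(q0 - 0.8) ≤ (q1 - p1)*(q0 - 0.8) := by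
    linarith [mul_le_mul_of_nonneg_right hupos hd0.le]
  have hb2' : (0.6 - ε/2)*(q0 - p0) ≤ b*(q0 - p0) :=
    mul_le_mul_of_nonneg_right (by linarith) (by linarith)
  have e1 : (0.6 - ε/2)*(q0 - p0) + (0.75 - 2.5*ε)*(q0 - p0)*(q0 - 0.8) ≤ q1*(q0 - p0) := by
    rw [hq1D]; linarith
  have hq1lb : 0.6 - ε/2 + (0.75 - 2.5*ε)*(q0 - 0.8) ≤ q1 := by
    by_contra h
    push_neg at h
    have h2 := mul_lt_mul_of_pos_right h hDpos
    linarith [e1, h2]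
  have hcoef : (0:ℝ) ≤ (q0 - 0.8)*(0.01875 - 1.875*ε + 1.25*ε^2) :=
    mul_nonneg hd0.le (by linarith [sq_nonneg ε])
  have m1 : (0.6 - q1)*(0.4 - ε/2) ≤ (ε/2 - (0.75 - 2.5*ε)*(q0 - 0.8))*(0.4 - ε/2) :=
    mul_le_mul_of_nonneg_right (by linarith) (by linarith)
  have hdub : q0 - 0.8 ≤ 0.61*ε := by linarith [m1, HUP, hcoef, hee, sq_nonneg ε]
  have hp0d : p0 ≤ q0 - 0.8 := by linarith
  have hDub : q0 - p0 ≤ 0.8 + (q0 - 0.8) := by linarith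
  have hDsq : (q0 - p0)^2 ≤ (0.8 + (q0 - 0.8))^2 := pow_le_pow_left₀ (by linarith) hDub 2
  have hsq : 1 - (0.8 + (q0 - 0.8))^2 ≤ (q1 - p1)^2 := by linarith [hdist]
  have hd2 : (q0 - 0.8)^2 ≤ 0.61*ε*(q0 - 0.8) := by
    linarith [mul_le_mul_of_nonneg_right hdub hd0.le]
  have hde : (0:ℝ) ≤ (q0 - 0.8)*(1/100 - ε) := mul_nonneg hd0.le (by linarith)
  have huge : 0.6 - 1.4*(q0 - 0.8) ≤ q1 - p1 := by
    by_contra h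
    push_neg at h
    have hc : (0:ℝ) < 0.6 - 1.4*(q0 - 0.8) := by linarith [hdub]
    have hpr := mul_pos (show (0:ℝ) < (0.6 - 1.4*(q0 - 0.8)) - (q1 - p1) by linarith)
      (show (0:ℝ) < (0.6 - 1.4*(q0 - 0.8)) + (q1 - p1) by linarith)
    nlinarith [hpr, hsq, hd2, hde, hd0]
  have hq1ub : 0.7375*((q0 - 0.8) - ε/2) ≤ 0.6 - q1 := by
    by_contra h
    push_neg at h
    have h2 := mul_lt_mul_of_pos_right h (show (0:ℝ) < 0.4 - ε/2 by linarith)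
    linarith [HUP, h2, mul_nonneg (show (0:ℝ) ≤ (q0 - 0.8) - ε/2 by linarith)
      (show (0:ℝ) ≤ 0.005 - 0.13125*ε by linarith)]
  have hp1d : p1 ≤ 0.6625*(q0 - 0.8) + 0.36875*ε := by linarith
  have hp0e : p0 ≤ 0.61*ε := by linarith
  have hp1e : p1 ≤ 0.78*ε := by linarith
  have s1 : p0*p0 ≤ (0.61*ε)*(0.61*ε) := mul_le_mul hp0e hp0e hp0 (by linarith)
  have s2 : p1*p1 ≤ (0.78*ε)*(0.78*ε) := mul_le_mul hp1e hp1e hp1 (by linarith)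
  nlinarith [s1, s2, mul_pos hε0 hε0]

set_option maxHeartbeats 1000000 in
lemma core (ε p0 p1 q0 q1 a b : ℝ) (hε0 : 0 < ε) (hε : ε ≤ 1/100)
    (hp0 : 0 ≤ p0) (hp1 : 0 ≤ p1)
    (hball : p0^2 + p1^2 ≤ 4*ε^2) (hann : ε^2 < p0^2 + p1^2)
    (hq0 : 0 ≤ q0) (hq1 : 0 ≤ q1) (hq1' : q1 ≤ 0.6)
    (hdist : (q0 - p0)^2 + (q1 - p1)^2 = 1)
    (haeq : a * (q0 - p0) = p1 * (q0 - p0) + (q1 - p1) * (0.4 - p0))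
    (hbeq : b * (q0 - p0) = p1 * (q0 - p0) + (q1 - p1) * (0.8 - p0))
    (ha1 : 0.3 - ε/2 ≤ a) (ha2 : a ≤ 0.3 + ε/2)
    (hslot : b ≤ ε/2 ∨ 0.6 - ε/2 ≤ b)
    (hup : 0.8 + ε/2 < q0 → (0.3 - ε/2) * (q0 - (0.8 + ε/2)) ≤ (0.6 - q1) * (0.4 - ε/2)) :
    False := by
  have hee : ε^2 ≤ ε/100 := by
    linarith [mul_nonneg hε0.le (show (0:ℝ) ≤ 1/100 - ε by linarith), sq_nonneg ε]
  have hp0' : p0 ≤ 2*ε := by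
    by_contra h
    push_neg at h
    have := mul_lt_mul' (le_of_lt h) h (by linarith) (by linarith)
    nlinarith [sq_nonneg p1]
  have hp1' : p1 ≤ 2*ε := by
    by_contra h
    push_neg at h
    have := mul_lt_mul' (le_of_lt h) h (by linarith) (by linarith)
    nlinarith [sq_nonneg p0]
  have hu1 : q1 - p1 ≤ 0.6 := by linarith
  have hu2 : -(0.6) ≤ q1 - p1 := by linarith
  have husq : (q1 - p1)^2 ≤ 0.36 := by
    nlinarith [mul_nonneg (show (0:ℝ) ≤ 0.6 - (q1 - p1) by linarith)
      (show (0:ℝ) ≤ 0.6 + (q1 - p1) by linarith)]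
  have hD8 : 0.8 ≤ q0 - p0 := by
    by_contra h
    push_neg at h
    have := mul_pos (show (0:ℝ) < 0.8 - (q0 - p0) by linarith)
      (show (0:ℝ) < 0.8 + (q0 - p0) by linarith)
    nlinarith [this, husq]
  have hD1 : q0 - p0 ≤ 1 := by linarith [sq_nonneg (q1 - p1), sq_nonneg (q0 - p0 - 1)]
  have hDpos : (0:ℝ) < q0 - p0 := by linarith
  have hba : 0.4*(q1 - p1) = (b - a)*(q0 - p0) := by linear_combination haeq - hbeq
  rcases hslot with hb1 | hb2
  · have t1 : (b - a)*(q0 - p0) ≤ (ε - 0.3)*(q0 - p0) :=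
      mul_le_mul_of_nonneg_right (by linarith) (by linarith)
    have t2 : (0.3 - ε)*0.8 ≤ (0.3 - ε)*(q0 - p0) :=
      mul_le_mul_of_nonneg_left hD8 (by linarith)
    have huneg : q1 - p1 ≤ 2*ε - 0.6 := by linarith [hba, t1, t2]
    have t3 : (0.3 - ε/2)*0.8 ≤ a*(q0 - p0) :=
      mul_le_mul (by linarith) hD8 (by norm_num) (by linarith)
    have t4 : (q1 - p1)*(0.4 - p0) ≤ (2*ε - 0.6)*(0.4 - p0) :=
      mul_le_mul_of_nonneg_right huneg (by linarith)
    have t5 : (2*ε - 0.6)*(0.4 - p0) ≤ (2*ε - 0.6)*0.3 := by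
      linarith [mul_nonneg (show (0:ℝ) ≤ 0.6 - 2*ε by linarith)
        (show (0:ℝ) ≤ 0.1 - p0 by linarith)]
    have t6 : p1*(q0 - p0) ≤ 2*ε*1 :=
      mul_le_mul hp1' hD1 (by linarith) (by linarith)
    linarith [haeq, t3, t4, t5, t6]
  · have hupos : (0.3 - ε)*(q0 - p0) ≤ 0.4*(q1 - p1) := by
      rw [hba]
      exact mul_le_mul_of_nonneg_right (by linarith) (by linarith)
    have t2 : (0.3 - ε)*0.8 ≤ (0.3 - ε)*(q0 - p0) :=
      mul_le_mul_of_nonneg_left hD8 (by linarith)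
    have hu2' : 0 < q1 - p1 := by linarith [hupos, t2]
    by_cases hδ : q0 ≤ 0.8 + ε/2
    · exact coreB ε p0 p1 q0 q1 hε0 hε hp0 hp1 hann hq1' hdist hee hD8 hu2' hδ
    · push_neg at hδ
      exact coreC ε p0 p1 q0 q1 b hε0 hε hp0 hp1 hann hq1' hdist hee hbeq hb2 hD8 hu2' hupos
        hδ (hup hδ)

-- ===== extraction of segment facts =====

set_option maxHeartbeats 1000000 in
lemma seg_facts (ε : ℝ) (hε0 : 0 < ε) (hε : ε ≤ 1/100) (p q : E2)
    (hd : dist p q = 1) (hseg : segment ℝ p q ⊆ tunnel ε)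
    (hp0 : 0 ≤ p 0) (hp0' : p 0 ≤ 2*ε) (hp1 : 0 ≤ p 1) (hp1' : p 1 ≤ 0.6) :
    ∃ A B : ℝ,
      (q 0 - p 0)^2 + (q 1 - p 1)^2 = 1 ∧
      0.8 ≤ q 0 - p 0 ∧ (0:ℝ) ≤ q 1 ∧ q 1 ≤ 0.6 ∧
      A * (q 0 - p 0) = p 1 * (q 0 - p 0) + (q 1 - p 1) * (0.4 - p 0) ∧
      B * (q 0 - p 0) = p 1 * (q 0 - p 0) + (q 1 - p 1) * (0.8 - p 0) ∧
      (0.3 - ε/2 ≤ A) ∧ (A ≤ 0.3 + ε/2) ∧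
      (B ≤ ε/2 ∨ 0.6 - ε/2 ≤ B) ∧
      (0.8 + ε/2 < q 0 →
        (0.3 - ε/2) * (q 0 - (0.8 + ε/2)) ≤ (0.6 - q 1) * (0.4 - ε/2) ∧
        (0.3 - ε/2) * (q 0 - (0.8 + ε/2)) ≤ q 1 * (0.4 - ε/2)) := by
  have hq := hseg (right_mem_segment ℝ p q)
  simp only [tunnel, Set.mem_diff, Set.mem_setOf_eq] at hq
  obtain ⟨⟨hq0, hq16, hql, hqu⟩, -⟩ := hq
  have hq1 : (0:ℝ) ≤ q 1 := le_trans (pl_lower_bounds hε0 hε hq0).1 hql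
  have hq1' : q 1 ≤ 0.6 := le_trans hqu (pl_upper_bounds hε0 hε hq0).2
  have hd2 : (q 0 - p 0)^2 + (q 1 - p 1)^2 = 1 := by
    rw [dist_sq] at hd
    have h := Real.sqrt_eq_one.mp hd
    linear_combination h
  have hu1 : q 1 - p 1 ≤ 0.6 := by linarith
  have hu2 : -(0.6) ≤ q 1 - p 1 := by linarith
  have husq : (q 1 - p 1)^2 ≤ 0.36 := by
    nlinarith [mul_nonneg (show (0:ℝ) ≤ 0.6 - (q 1 - p 1) by linarith)
      (show (0:ℝ) ≤ 0.6 + (q 1 - p 1) by linarith)]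
  have hD8 : 0.8 ≤ q 0 - p 0 := by
    by_contra h
    push_neg at h
    have := mul_pos (show (0:ℝ) < 0.8 - (q 0 - p 0) by linarith)
      (show (0:ℝ) < 0.8 + (q 0 - p 0) by linarith)
    nlinarith [this, husq]
  have hD1 : q 0 - p 0 ≤ 1 := by
    linarith [sq_nonneg (q 1 - p 1), sq_nonneg (q 0 - p 0 - 1)]
  have hDpos : (0:ℝ) < q 0 - p 0 := by linarith
  -- the segment point above x = 0.4
  have hm1 : p + ((0.4 - p 0)/(q 0 - p 0)) • (q - p) ∈ segment ℝ p q := by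
    rw [segment_eq_image']
    refine ⟨_, ⟨div_nonneg (by linarith) hDpos.le, ?_⟩, rfl⟩
    rw [div_le_one hDpos]; linarith
  have hz1 := hseg hm1
  simp only [tunnel, Set.mem_diff, Set.mem_setOf_eq] at hz1
  obtain ⟨⟨-, -, hz1l, hz1u⟩, -⟩ := hz1
  rw [comb_app0, comb_app1] at hz1l hz1u
  have hx1 : p 0 + ((0.4 - p 0)/(q 0 - p 0)) * (q 0 - p 0) = 0.4 := by
    field_simp
    ring
  rw [hx1, pl_lower_at04 hε0 hε] at hz1l
  rw [hx1, pl_upper_at04 hε0 hε] at hz1u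
  -- the segment point above x = 0.8
  have hm2 : p + ((0.8 - p 0)/(q 0 - p 0)) • (q - p) ∈ segment ℝ p q := by
    rw [segment_eq_image']
    refine ⟨_, ⟨div_nonneg (by linarith) hDpos.le, ?_⟩, rfl⟩
    rw [div_le_one hDpos]; linarith
  have hz2 := hseg hm2
  simp only [tunnel, Set.mem_diff, Set.mem_setOf_eq, Set.mem_union] at hz2
  obtain ⟨-, hno⟩ := hz2
  have hx2 : (p + ((0.8 - p 0)/(q 0 - p 0)) • (q - p)) 0 = 0.8 := by
    rw [comb_app0]; field_simp; ring
  refine ⟨p 1 + ((0.4 - p 0)/(q 0 - p 0)) * (q 1 - p 1),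
    p 1 + ((0.8 - p 0)/(q 0 - p 0)) * (q 1 - p 1),
    hd2, hD8, hq1, hq1', by field_simp, by field_simp, hz1l, hz1u, ?_, ?_⟩
  · -- the slot at x = 0.8
    by_contra hB
    push_neg at hB
    obtain ⟨hB1, hB2⟩ := hB
    apply hno
    refine Or.inl (Or.inr ?_)
    have hzeq : p + ((0.8 - p 0)/(q 0 - p 0)) • (q - p)
        = pt 0.8 (p 1 + ((0.8 - p 0)/(q 0 - p 0)) * (q 1 - p 1)) := by
      rw [pt_self (p + ((0.8 - p 0)/(q 0 - p 0)) • (q - p))]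
      exact pt_congr hx2 (comb_app1 p q _)
    rw [hzeq]
    exact mem_interior_OT2 hε0 hε (by linarith) (by linarith)
  · intro h
    have hq012 : q 0 ≤ 1.2 := by linarith
    rw [pl_upper_late hε0 hε h hq012] at hqu
    rw [pl_lower_late hε0 hε h hq012] at hql
    have hd4 : (0:ℝ) < 0.4 - ε/2 := by linarith
    constructor
    · exact (div_le_iff₀ hd4).mp (by linarith [hqu])
    · exact (div_le_iff₀ hd4).mp (by linarith [hql])

-- ===== main theorem =====

set_option maxHeartbeats 1000000 in
theorem tunnel_annulus_blocked' (ε : ℝ) (hε0 : 0 < ε) (hε : ε ≤ 1 / 100) :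
    (∀ p ∈ Q1 (pt 0 0) (2 * ε) \ Q1 (pt 0 0) ε, ∀ q : E2, dist p q = 1 →
      ¬ segment ℝ p q ⊆ tunnel ε) ∧
    (∀ p ∈ Q4 (pt 0 0.6) (2 * ε) \ Q4 (pt 0 0.6) ε, ∀ q : E2, dist p q = 1 →
      ¬ segment ℝ p q ⊆ tunnel ε) := by
  constructor
  · rintro p ⟨⟨hpd, hpx, hpy⟩, hpn⟩ q hd hseg
    have hpx' : (0:ℝ) ≤ p 0 := by simpa [pt_app0] using hpx
    have hpy' : (0:ℝ) ≤ p 1 := by simpa [pt_app1] using hpy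
    have hball : (p 0)^2 + (p 1)^2 ≤ 4*ε^2 := by
      rw [dist_sq, pt_app0, pt_app1] at hpd
      have hnn : (0:ℝ) ≤ (p 0 - 0)^2 + (p 1 - 0)^2 := by positivity
      nlinarith [Real.sq_sqrt hnn, Real.sqrt_nonneg ((p 0 - 0)^2 + (p 1 - 0)^2)]
    have hann : ε^2 < (p 0)^2 + (p 1)^2 := by
      have hpd2 : ¬ dist p (pt 0 0) ≤ ε := fun h => hpn ⟨h, hpx, hpy⟩
      push_neg at hpd2
      rw [dist_sq, pt_app0, pt_app1] at hpd2
      have := (Real.lt_sqrt (by positivity)).mp hpd2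
      nlinarith [this]
    have hp0' : p 0 ≤ 2*ε := by nlinarith [sq_nonneg (p 1)]
    have hp1' : p 1 ≤ 2*ε := by nlinarith [sq_nonneg (p 0)]
    obtain ⟨A, B, hd2, hD8, hq1, hq1', hA, hB, hA1, hA2, hslot, hup⟩ :=
      seg_facts ε hε0 hε p q hd hseg hpx' hp0' hpy' (by linarith)
    exact core ε (p 0) (p 1) (q 0) (q 1) A B hε0 hε hpx' hpy' hball hann (by linarith)
      hq1 hq1' hd2 hA hB hA1 hA2 hslot (fun h => (hup h).1)
  · rintro p ⟨⟨hpd, hpx, hpy⟩, hpn⟩ q hd hseg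
    have hpx' : (0:ℝ) ≤ p 0 := by simpa [pt_app0] using hpx
    have hpy' : p 1 ≤ 0.6 := by simpa [pt_app1] using hpy
    have hball : (p 0)^2 + (0.6 - p 1)^2 ≤ 4*ε^2 := by
      rw [dist_sq, pt_app0, pt_app1] at hpd
      have hnn : (0:ℝ) ≤ (p 0 - 0)^2 + (p 1 - 0.6)^2 := by positivity
      nlinarith [Real.sq_sqrt hnn, Real.sqrt_nonneg ((p 0 - 0)^2 + (p 1 - 0.6)^2)]
    have hann : ε^2 < (p 0)^2 + (0.6 - p 1)^2 := by
      have hpd2 : ¬ dist p (pt 0 0.6) ≤ ε := fun h => hpn ⟨h, hpx, hpy⟩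
      push_neg at hpd2
      rw [dist_sq, pt_app0, pt_app1] at hpd2
      have := (Real.lt_sqrt (by positivity)).mp hpd2
      nlinarith [this]
    have hp0' : p 0 ≤ 2*ε := by nlinarith [sq_nonneg (0.6 - p 1)]
    have hp1l : 0.6 - 2*ε ≤ p 1 := by nlinarith [sq_nonneg (p 0)]
    have hpy0 : (0:ℝ) ≤ p 1 := by linarith
    obtain ⟨A, B, hd2, hD8, hq1, hq1', hA, hB, hA1, hA2, hslot, hup⟩ :=
      seg_facts ε hε0 hε p q hd hseg hpx' hp0' hpy0 hpy'
    exact core ε (p 0) (0.6 - p 1) (q 0) (0.6 - q 1) (0.6 - A) (0.6 - B) hε0 hε hpx'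
      (by linarith) hball hann (by linarith) (by linarith) (by linarith)
      (by linear_combination hd2) (by linear_combination -hA) (by linear_combination -hB)
      (by linarith) (by linarith)
      (hslot.elim (fun h => Or.inr (by linarith)) (fun h => Or.inl (by linarith)))
      (fun h => by linarith [(hup h).2])

/-- no unit edge inside the tunnel can start in the annular parts of the
entrance quadrants between radius `ε` and radius `2ε`. -/
theorem tunnel_annulus_blocked (ε : ℝ) (hε0 : 0 < ε) (hε : ε ≤ 1 / 100) :
    (∀ p ∈ Q1 (pt 0 0) (2 * ε) \ Q1 (pt 0 0) ε, ∀ q : E2, dist p q = 1 →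
      ¬ segment ℝ p q ⊆ tunnel ε) ∧
    (∀ p ∈ Q4 (pt 0 0.6) (2 * ε) \ Q4 (pt 0 0.6) ε, ∀ q : E2, dist p q = 1 →
      ¬ segment ℝ p q ⊆ tunnel ε) := by
  exact tunnel_annulus_blocked' ε hε0 hε
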